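/- On the Lie algebra rr₃,₀ ([f₁,f₂] = f₂) with symplectic form ω₀ = f¹² + f³⁴, the two para-complex structures K₀₁ = −E₁₁ + E₂₂ − E₃₃ + E₄₄ and K₀₂ = E₁₁ + 2yE₁₂ − E₂₂ + E₃₃ − E₄₄ (y ∈ ℝ) are not equivalent: there is no Lie algebra automorphism L of rr₃,₀ with L*ω₀ = ω₀ and L⁻¹ ∘ K₀₁ ∘ L = K₀₂. -/

import Mathlib

/-- The bracket of the Lie algebra `rr₃,₀` on `ℝ⁴` (0-indexed): only nonzero
bracket `[f₀,f₁] = f₁`. -/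
def brRR30 (u v : Fin 4 → ℝ) : Fin 4 → ℝ :=
  ![0, u 0 * v 1 - u 1 * v 0, 0, 0]

/-- The symplectic form `ω₀ = f¹² + f³⁴` (0-indexed: `f⁰¹ + f²³`). -/
def om0RR30 (u v : Fin 4 → ℝ) : ℝ :=
  u 0 * v 1 - u 1 * v 0 + (u 2 * v 3 - u 3 * v 2)

/-- `K₀₁ = −E₁₁ + E₂₂ − E₃₃ + E₄₄`. -/
def K01RR30 (u : Fin 4 → ℝ) : Fin 4 → ℝ := ![-u 0, u 1, -u 2, u 3]

/-- `K₀₂ = E₁₁ + 2yE₁₂ − E₂₂ + E₃₃ − E₄₄`: `f₁ ↦ f₁`, `f₂ ↦ 2yf₁ − f₂`,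
`f₃ ↦ f₃`, `f₄ ↦ −f₄`. -/
def K02RR30 (y : ℝ) (u : Fin 4 → ℝ) : Fin 4 → ℝ :=
  ![u 0 + 2 * y * u 1, -u 1, u 2, -u 3]

/-- On `rr₃,₀` with `ω₀ = f¹² + f³⁴`, the para-complex structures `K₀₁` and `K₀₂`
are not equivalent: no Lie algebra automorphism `L` with `L*ω₀ = ω₀` and
`L⁻¹ ∘ K₀₁ ∘ L = K₀₂` exists. -/
theorem stmt15 (y : ℝ) :
    ¬ ∃ L : (Fin 4 → ℝ) →ₗ[ℝ] (Fin 4 → ℝ),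
      Function.Bijective L ∧
      (∀ u v, L (brRR30 u v) = brRR30 (L u) (L v)) ∧
      (∀ u v, om0RR30 (L u) (L v) = om0RR30 u v) ∧
      (∀ u, K01RR30 (L u) = L (K02RR30 y u)) := by
  rintro ⟨L, hbij, hbr, hω, hK⟩
  set e0 : Fin 4 → ℝ := ![1, 0, 0, 0] with he0
  set e1 : Fin 4 → ℝ := ![0, 1, 0, 0] with he1
  have hbr01 : brRR30 e0 e1 = e1 := by
    funext i; fin_cases i <;> simp [brRR30, he0, he1]
  have h1 : L e1 = brRR30 (L e0) (L e1) := by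
    conv_lhs => rw [← hbr01, hbr e0 e1]
  obtain ⟨b, hb⟩ : ∃ b : ℝ, L e1 1 = b := ⟨L e1 1, rfl⟩
  have h0 : L e1 0 = 0 := by rw [h1]; simp [brRR30]
  have h2 : L e1 2 = 0 := by rw [h1]; simp [brRR30]
  have h3 : L e1 3 = 0 := by rw [h1]; simp [brRR30]
  have hLe1 : L e1 = b • e1 := by
    rw [he1] at h0 h2 h3 hb ⊢
    funext i; fin_cases i <;> simp [he1, h0, h2, h3, hb]
  have hK02e1 : K02RR30 y e1 = (2 * y) • e0 - e1 := by
    funext i; fin_cases i <;> simp [K02RR30, he0, he1]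
  have hK01 : K01RR30 (L e1) = b • e1 := by
    rw [hLe1]; funext i; fin_cases i <;> simp [K01RR30, he1]
  have hKe1 := hK e1
  rw [hK01, hK02e1, map_sub, map_smul, hLe1] at hKe1
  -- hKe1 : b • e1 = (2*y) • L e0 - b • e1
  have key : y • L e0 = b • e1 := by
    have h2 : (2 * y) • L e0 = (2 * b) • e1 := by
      have := hKe1
      rw [eq_sub_iff_add_eq] at this
      rw [← this]
      funext i; simp [two_mul, add_smul]; ring
    have : (2 : ℝ) • (y • L e0) = (2 : ℝ) • (b • e1) := by
      rw [smul_smul, smul_smul]; exact h2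
    exact smul_right_injective _ (by norm_num) this
  by_cases hb0 : b = 0
  · have : L e1 = 0 := by rw [hLe1, hb0, zero_smul]
    have he1z : e1 = 0 := hbij.1 (by rw [this, map_zero])
    have := congrFun he1z 1
    simp [he1] at this
  · have hLy : L (y • e0) = L e1 := by
      rw [map_smul, key, hLe1]
    have := hbij.1 hLy
    have := congrFun this 1
    simp [he0, he1] at this
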